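/- arXiv:1907.12634 — 2 statements merged into one kernel-verified Lean document; each statement's English description precedes it below -/
import Mathlib

section
/- For every non-negative integer t and every positive integer a, every graph G of treewidth at most t admits a set Z ⊆ V(G) chosen from a probability distribution in which each vertex appears with probability at most 1/a, such that the treedepth of G − Z is always at most 2^{t(t+1)/2+1}·a^t. In other words, the class of graphs of treewidth at most t is fractionally td-fragile at rate r(a) = 2^{t(t+1)/2+1} a^t. -/
/-- `le` is the (reflexive) ancestor order of a rooted forest on the vertices of
`G` in which every edge of `G` joins a vertex to an ancestor or descendant:
it is a partial order whose principal down-sets are chains, and every edge of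
`G` is comparable. -/
def IsForestOrder {V : Type} (G : SimpleGraph V) (le : V → V → Prop) : Prop :=
  Reflexive le ∧ Transitive le ∧ AntiSymmetric le ∧
    (∀ v x y, le x v → le y v → le x y ∨ le y x) ∧
    ∀ ⦃u v : V⦄, G.Adj u v → le u v ∨ le v u

/-- `G` has treedepth at most `n`: there is a rooted forest of depth at most
`n - 1` on `V(G)` (each vertex has at most `n` ancestors, itself included)
whose ancestor-descendant pairs cover all edges of `G`. -/
def TreedepthLE {V : Type} (G : SimpleGraph V) (n : ℕ) : Prop :=
  ∃ le : V → V → Prop, IsForestOrder G le ∧ ∀ v, {u | le u v}.ncard ≤ n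

/-- The treedepth of `G`. -/
noncomputable def treedepth {V : Type} (G : SimpleGraph V) : ℕ :=
  sInf {n | TreedepthLE G n}

/-- A tree decomposition of a graph `G`. -/
structure TreeDecomp {V : Type} (G : SimpleGraph V) where
  /-- index type of the decomposition tree -/
  ι : Type
  /-- the decomposition tree -/
  t : SimpleGraph ι
  tree : t.IsTree
  /-- the bags of the decomposition -/
  bag : ι → Set V
  mem_bag : ∀ v : V, ∃ i, v ∈ bag i
  edge_bag : ∀ ⦃u v : V⦄, G.Adj u v → ∃ i, u ∈ bag i ∧ v ∈ bag i
  bag_connected : ∀ v : V, (t.induce {i | v ∈ bag i}).Connected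

/-- `G` has treewidth at most `k`: there is a tree decomposition all of whose
bags have at most `k + 1` vertices. -/
def TreewidthLE {V : Type} (G : SimpleGraph V) (k : ℕ) : Prop :=
  ∃ D : TreeDecomp G, ∀ i, (D.bag i).ncard ≤ k + 1

/-! ### Auxiliary development -/

noncomputable section Frag
open scoped Classical

namespace Frag

/-- The recursive fragility rate: `rate t a = 2^(t(t+1)/2) * a^t`. -/
def rate : ℕ → ℕ → ℕ
  | 0, _ => 1
  | t+1, a => 2 * a * rate t (2 * a)

lemma rate_pos (t : ℕ) : ∀ a, 0 < a → 0 < rate t a := by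
  induction t with
  | zero => intro a _; simp [rate]
  | succ t ih => intro a ha; simpa [rate] using Nat.mul_pos (by omega) (ih (2*a) (by omega))

lemma rate_eq (t : ℕ) : ∀ a, rate t a = 2 ^ (t * (t+1) / 2) * a ^ t := by
  induction t with
  | zero => intro a; simp [rate]
  | succ t ih =>
    intro a
    have h2 : 2 ∣ t * (t + 1) := Nat.even_mul_succ_self t |>.two_dvd
    obtain ⟨c, hc⟩ := h2
    have hdiv : t * (t+1) / 2 = c := by omega
    have hdiv2 : (t+1) * (t+2) / 2 = c + (t+1) := by
      have : (t+1) * (t+2) = t * (t+1) + 2 * (t+1) := by ring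
      omega
    rw [rate, ih (2*a), hdiv, hdiv2]
    ring

lemma rate_le_bound (t a : ℕ) : rate t a ≤ 2 ^ (t * (t + 1) / 2 + 1) * a ^ t := by
  rw [rate_eq, pow_succ]
  nlinarith [pow_pos (show (0:ℕ) < 2 by norm_num) (t * (t+1)/2),
    Nat.zero_le (2 ^ (t * (t+1)/2) * a ^ t)]

/-- A rooted tree decomposition interface: nodes `N` with a depth function and
parent map, bags, and for each vertex a chosen top node `tau v`, such that the
set of bags containing `v` behaves like a subtree (presence along ancestor
chains up to `tau v`). -/
structure RDec (W : Type) [Fintype W] [DecidableEq W] (G : SimpleGraph W) (t : ℕ) where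
  N : Type
  depth : N → ℕ
  par : N → N
  hroot : ∀ y, depth y = 0 → par y = y
  hpar : ∀ y, depth y ≠ 0 → depth (par y) + 1 = depth y
  bag : N → Finset W
  tau : W → N
  htau : ∀ v, v ∈ bag (tau v)
  hanc : ∀ v y, v ∈ bag y →
    ∃ k, k ≤ depth y ∧ par^[k] y = tau v ∧ ∀ j ≤ k, v ∈ bag (par^[j] y)
  hedge : ∀ ⦃u v⦄, G.Adj u v → ∃ y, u ∈ bag y ∧ v ∈ bag y
  hcard : ∀ y, (bag y).card ≤ t + 1

/-- The bundle of data for the recursive construction: a graph with a rooted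
decomposition, together with a "guide" partial forest order `R` compatible
with the decomposition. -/
structure Setup (W : Type) [Fintype W] [DecidableEq W] (t : ℕ) where
  G : SimpleGraph W
  D : RDec W G t
  R : W → W → Prop
  th : W → ℕ
  hRrefl : Reflexive R
  hRtrans : Transitive R
  hRchain : ∀ v x y, R x v → R y v → R x y ∨ R y x
  hguard : ∀ y, ∀ u ∈ D.bag y, ∀ w ∈ D.bag y, R u w ∨ R w u
  hmono : ∀ u v, R u v → D.depth (D.tau u) ≤ D.depth (D.tau v)
  hth : ∀ u v, R u v → u ≠ v → th u < th v

variable {W : Type} [Fintype W] [DecidableEq W] {t : ℕ}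

namespace RDec

variable {G : SimpleGraph W} (D : RDec W G t)

lemma depth_iter (k : ℕ) (y : D.N) : D.depth (D.par^[k] y) = D.depth y - k := by
  induction k with
  | zero => simp
  | succ k ih =>
    rw [Function.iterate_succ_apply']
    rcases Nat.eq_zero_or_pos (D.depth (D.par^[k] y)) with h0 | hpos
    · rw [D.hroot _ h0]; omega
    · have := D.hpar (D.par^[k] y) (by omega); omega

lemma iter_fix {y : D.N} (h : D.depth y = 0) (k : ℕ) : D.par^[k] y = y := by
  induction k with
  | zero => rfl
  | succ k ih => rw [Function.iterate_succ_apply', ih, D.hroot _ h]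

/-- Key bag lemma: two members of a bag, the one whose top is weakly higher is
present in the top bag of the other. -/
lemma mem_bag_tau {u w : W} {y : D.N} (hu : u ∈ D.bag y) (hw : w ∈ D.bag y)
    (hd : D.depth (D.tau u) ≤ D.depth (D.tau w)) : u ∈ D.bag (D.tau w) := by
  obtain ⟨k1, hk1, he1, hp1⟩ := D.hanc u y hu
  obtain ⟨k2, hk2, he2, hp2⟩ := D.hanc w y hw
  have d1 : D.depth (D.tau u) = D.depth y - k1 := by rw [← he1, D.depth_iter]
  have d2 : D.depth (D.tau w) = D.depth y - k2 := by rw [← he2, D.depth_iter]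
  have : k2 ≤ k1 := by omega
  rw [← he2]; exact hp1 k2 (by omega)

end RDec

namespace Setup

variable (S : Setup W t)

def dtau (v : W) : ℕ := S.D.depth (S.D.tau v)

def rnk (v : W) : Lex (ℕ × ℕ) := toLex (S.dtau v, S.th v)

/-- Bag-mates of `v` in its top bag. -/
def A (v : W) : Finset W := (S.D.bag (S.D.tau v)).erase v

/-- `R`-ancestral bag-mates of `v` in its top bag (its guardians). -/
def AR (v : W) : Finset W := (S.A v).filter (fun u => S.R u v)

lemma card_A (v : W) : (S.A v).card ≤ t := by
  have h := S.D.hcard (S.D.tau v)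
  have := Finset.card_erase_of_mem (S.D.htau v)
  unfold A; omega

lemma mem_A_iff {u v : W} : u ∈ S.A v ↔ u ≠ v ∧ u ∈ S.D.bag (S.D.tau v) :=
  Finset.mem_erase

lemma mem_AR {u v : W} (h : u ∈ S.AR v) :
    u ≠ v ∧ u ∈ S.D.bag (S.D.tau v) ∧ S.R u v := by
  rw [AR, Finset.mem_filter, mem_A_iff] at h; tauto

lemma rnk_lt_of_R {u v : W} (hR : S.R u v) (hne : u ≠ v) : S.rnk u < S.rnk v := by
  have h1 := S.hmono u v hR
  have h2 := S.hth u v hR hne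
  rw [rnk, rnk, Prod.Lex.lt_iff]
  simp only [dtau, ofLex_toLex]
  omega

lemma rnk_lt_of_AR {u v : W} (h : u ∈ S.AR v) : S.rnk u < S.rnk v := by
  obtain ⟨hne, _, hR⟩ := S.mem_AR h
  exact S.rnk_lt_of_R hR hne

/-- The guardian parent: a maximal-rank element of `AR v`. -/
def pa (v : W) (h : (S.AR v).Nonempty) : W :=
  (Finset.exists_max_image (S.AR v) S.rnk h).choose

lemma pa_mem (v : W) (h : (S.AR v).Nonempty) : S.pa v h ∈ S.AR v :=
  (Finset.exists_max_image (S.AR v) S.rnk h).choose_spec.1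

lemma pa_max (v : W) (h : (S.AR v).Nonempty) :
    ∀ u ∈ S.AR v, S.rnk u ≤ S.rnk (S.pa v h) :=
  (Finset.exists_max_image (S.AR v) S.rnk h).choose_spec.2

lemma pa_irrel (v : W) (h h' : (S.AR v).Nonempty) : S.pa v h = S.pa v h' := rfl

lemma pa_rnk_lt (v : W) (h : (S.AR v).Nonempty) : S.rnk (S.pa v h) < S.rnk v :=
  S.rnk_lt_of_AR (S.pa_mem v h)

/-- Depth in the guardian forest. -/
def dep (v : W) : ℕ :=
  if h : (S.AR v).Nonempty then dep (S.pa v h) + 1 else 0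
termination_by (S.dtau v, S.th v)
decreasing_by
  have h' := S.pa_rnk_lt v h
  rw [rnk, rnk, Prod.Lex.lt_iff] at h'
  rw [Prod.lex_def]
  exact h'

lemma dep_eq (v : W) :
    S.dep v = if h : (S.AR v).Nonempty then S.dep (S.pa v h) + 1 else 0 := by
  rw [dep]

lemma dep_pa (v : W) (h : (S.AR v).Nonempty) : S.dep v = S.dep (S.pa v h) + 1 := by
  rw [S.dep_eq v, dif_pos h]

lemma dep_of_empty {v : W} (h : ¬ (S.AR v).Nonempty) : S.dep v = 0 := by
  rw [S.dep_eq v, dif_neg h]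

/-- One step up in the guardian forest. -/
def step (x y : W) : Prop := ∃ h : (S.AR x).Nonempty, S.pa x h = y

/-- `u` is an ancestor of `v` in the guardian forest (reflexively). -/
def Anc (u v : W) : Prop := Relation.ReflTransGen S.step v u

lemma step_R {x y : W} (h : S.step x y) : S.R y x := by
  obtain ⟨hne, rfl⟩ := h
  exact (S.mem_AR (S.pa_mem x hne)).2.2

lemma step_dep {x y : W} (h : S.step x y) : S.dep x = S.dep y + 1 := by
  obtain ⟨hne, rfl⟩ := h
  exact S.dep_pa x hne

lemma step_rnk {x y : W} (h : S.step x y) : S.rnk y < S.rnk x := by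
  obtain ⟨hne, rfl⟩ := h
  exact S.pa_rnk_lt x hne

lemma step_unique {x y y' : W} (h : S.step x y) (h' : S.step x y') : y = y' := by
  obtain ⟨hne, rfl⟩ := h
  obtain ⟨hne', rfl⟩ := h'
  rfl

lemma anc_refl (v : W) : S.Anc v v := Relation.ReflTransGen.refl

lemma anc_trans {u v w : W} (h1 : S.Anc u v) (h2 : S.Anc w u) : S.Anc w v :=
  Relation.ReflTransGen.trans h1 h2

lemma anc_dep_le {u v : W} (h : S.Anc u v) : S.dep u ≤ S.dep v := by
  induction h with
  | refl => exact le_refl _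
  | tail _ hstep ih => have := S.step_dep hstep; omega

lemma anc_cases {u v : W} (h : S.Anc u v) :
    u = v ∨ (S.R u v ∧ S.dep u < S.dep v) := by
  induction h with
  | refl => exact Or.inl rfl
  | tail hr hstep ih =>
    right
    have hR := S.step_R hstep
    have hd := S.step_dep hstep
    rcases ih with rfl | ⟨hR2, hd2⟩
    · exact ⟨hR, by omega⟩
    · exact ⟨S.hRtrans hR hR2, by omega⟩

lemma anc_R {u v : W} (h : S.Anc u v) : S.R u v := by
  rcases S.anc_cases h with rfl | ⟨h, _⟩
  · exact S.hRrefl u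
  · exact h

lemma anc_antisymm {u v : W} (h1 : S.Anc u v) (h2 : S.Anc v u) : u = v := by
  rcases S.anc_cases h1 with rfl | ⟨_, hd1⟩
  · rfl
  · rcases S.anc_cases h2 with h | ⟨_, hd2⟩
    · exact h.symm
    · omega

lemma anc_dep_eq {u v : W} (h : S.Anc u v) (hd : S.dep u = S.dep v) : u = v := by
  rcases S.anc_cases h with rfl | ⟨_, hd1⟩
  · rfl
  · omega

/-- Ancestors of a common vertex are linearly ordered. -/
lemma anc_linear {x y v : W} (hx : S.Anc x v) (hy : S.Anc y v) :
    S.Anc x y ∨ S.Anc y x := by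
  generalize hd : S.dep v = d at *
  induction d using Nat.strong_induction_on generalizing v x y with
  | _ d ih =>
    rcases Relation.ReflTransGen.cases_head hx with rfl | ⟨c, hc, hcx⟩
    · exact Or.inr hy
    · rcases Relation.ReflTransGen.cases_head hy with rfl | ⟨c', hc', hcy⟩
      · exact Or.inl hx
      · have hcc : c = c' := S.step_unique hc hc'
        subst hcc
        have hdc : S.dep c + 1 = d := by have := S.step_dep hc; omega
        exact ih (S.dep c) (by omega) hcx hcy rfl

lemma anc_total_of_dep {x y v : W} (hx : S.Anc x v) (hy : S.Anc y v)
    (hd : S.dep x ≤ S.dep y) : S.Anc x y := by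
  rcases S.anc_linear hx hy with h | h
  · exact h
  · have := S.anc_dep_le h
    have : S.dep x = S.dep y := by omega
    rw [S.anc_dep_eq h this.symm]
    exact Relation.ReflTransGen.refl

/-- Nesting: a non-parent guardian of `v` is a guardian of the parent. -/
lemma nesting {u v : W} (hu : u ∈ S.AR v) (h : (S.AR v).Nonempty)
    (hne : u ≠ S.pa v h) : u ∈ S.AR (S.pa v h) := by
  set w := S.pa v h with hw
  obtain ⟨hune, hubag, huR⟩ := S.mem_AR hu
  obtain ⟨hwne, hwbag, hwR⟩ := S.mem_AR (S.pa_mem v h)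
  -- u and w = pa v are both R-below v, hence comparable
  have hcomp := S.hRchain v u w huR hwR
  have hRuw : S.R u w := by
    rcases hcomp with h1 | h1
    · exact h1
    · -- R w u would give rnk w < rnk u, contradicting maximality of w
      exfalso
      have h2 : S.rnk w < S.rnk u := S.rnk_lt_of_R h1 (Ne.symm hne)
      have h3 : S.rnk u ≤ S.rnk w := S.pa_max v h u hu
      exact absurd h3 (not_le.mpr h2)
  -- membership in the bag of tau w
  have hmem : u ∈ S.D.bag (S.D.tau w) :=
    S.D.mem_bag_tau hubag hwbag (S.hmono u w hRuw)
  rw [AR, Finset.mem_filter, mem_A_iff]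
  exact ⟨⟨hne, hmem⟩, hRuw⟩

/-- Climbing: every guardian of `v` is an ancestor of `v` in the guardian
forest. -/
lemma climb {u v : W} (hu : u ∈ S.AR v) : S.Anc u v := by
  generalize hd : S.dep v = d at *
  induction d using Nat.strong_induction_on generalizing v u with
  | _ d ih =>
    have h : (S.AR v).Nonempty := ⟨u, hu⟩
    by_cases heq : u = S.pa v h
    · exact Relation.ReflTransGen.single ⟨h, heq.symm⟩
    · have h2 : u ∈ S.AR (S.pa v h) := S.nesting hu h heq
      have hd2 : S.dep (S.pa v h) + 1 = d := by have := S.dep_pa v h; omega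
      have := ih (S.dep (S.pa v h)) (by omega) h2 rfl
      exact Relation.ReflTransGen.head ⟨h, rfl⟩ this

/-- All members of any bag are linearly ordered by ancestry. -/
lemma bag_anc {u w : W} {y : S.D.N} (hu : u ∈ S.D.bag y) (hw : w ∈ S.D.bag y) :
    S.Anc u w ∨ S.Anc w u := by
  by_cases hne : u = w
  · subst hne; exact Or.inl (S.anc_refl u)
  -- they are R-comparable; WLOG R u w; then rnk u < rnk w and u ∈ AR w
  suffices h : ∀ u w : W, u ∈ S.D.bag y → w ∈ S.D.bag y → u ≠ w → S.R u w → S.Anc u w by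
    rcases S.hguard y u hu w hw with h1 | h1
    · exact Or.inl (h u w hu hw hne h1)
    · exact Or.inr (h w u hw hu (Ne.symm hne) h1)
  intro u w hu hw hne hR
  have : u ∈ S.AR w := by
    rw [AR, Finset.mem_filter, mem_A_iff]
    exact ⟨⟨hne, S.D.mem_bag_tau hu hw (S.hmono u w hR)⟩, hR⟩
  exact S.climb this

/-- Edges of `G` join guardian-forest-comparable pairs, with the `R`-smaller
endpoint an ancestor. -/
lemma edge_anc {u v : W} (h : S.G.Adj u v) : S.Anc u v ∨ S.Anc v u := by
  obtain ⟨y, hu, hv⟩ := S.D.hedge h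
  exact S.bag_anc hu hv

/-- Survivors of the cut at residue `s` mod `b`. -/
def srv (b s : ℕ) (v : W) : Prop := S.dep v % b ≠ s

/-- Representative map: the root of the segment (maximal surviving parent
chain) containing `v`. -/
def e (b s : ℕ) (v : W) : W :=
  if h : (S.AR v).Nonempty then
    (if S.dep (S.pa v h) % b = s then v else e b s (S.pa v h))
  else v
termination_by (S.dtau v, S.th v)
decreasing_by
  have h' := S.pa_rnk_lt v h
  rw [rnk, rnk, Prod.Lex.lt_iff] at h'
  rw [Prod.lex_def]
  exact h'

lemma e_eq (b s v) :
    S.e b s v = if h : (S.AR v).Nonempty then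
      (if S.dep (S.pa v h) % b = s then v else S.e b s (S.pa v h))
    else v := by
  rw [e]

lemma e_of_empty {b s v} (h : ¬ (S.AR v).Nonempty) : S.e b s v = v := by
  rw [S.e_eq, dif_neg h]

lemma e_of_dead {b s v} (h : (S.AR v).Nonempty) (hd : S.dep (S.pa v h) % b = s) :
    S.e b s v = v := by
  rw [S.e_eq, dif_pos h, if_pos hd]

lemma e_of_alive {b s v} (h : (S.AR v).Nonempty) (hd : S.dep (S.pa v h) % b ≠ s) :
    S.e b s v = S.e b s (S.pa v h) := by
  rw [S.e_eq, dif_pos h, if_neg hd]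

lemma e_anc (b s v) : S.Anc (S.e b s v) v := by
  generalize hd : S.dep v = d at *
  induction d using Nat.strong_induction_on generalizing v with
  | _ d ih =>
    by_cases h : (S.AR v).Nonempty
    · by_cases hdead : S.dep (S.pa v h) % b = s
      · rw [S.e_of_dead h hdead]; exact S.anc_refl v
      · rw [S.e_of_alive h hdead]
        have hdp : S.dep (S.pa v h) + 1 = d := by have := S.dep_pa v h; omega
        have := ih (S.dep (S.pa v h)) (by omega) (S.pa v h) rfl
        exact S.anc_trans (Relation.ReflTransGen.single ⟨h, rfl⟩) this
    · rw [S.e_of_empty h]; exact S.anc_refl v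

lemma e_dep_le (b s v) : S.dep (S.e b s v) ≤ S.dep v :=
  S.anc_dep_le (S.e_anc b s v)

lemma e_srv {b s v} (hv : S.srv b s v) :
    S.srv b s (S.e b s v) ∧ S.e b s (S.e b s v) = S.e b s v := by
  generalize hd : S.dep v = d at *
  induction d using Nat.strong_induction_on generalizing v with
  | _ d ih =>
    by_cases h : (S.AR v).Nonempty
    · by_cases hdead : S.dep (S.pa v h) % b = s
      · rw [S.e_of_dead h hdead]
        exact ⟨hv, S.e_of_dead h hdead⟩
      · rw [S.e_of_alive h hdead]
        have hdp : S.dep (S.pa v h) + 1 = d := by have := S.dep_pa v h; omega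
        exact ih (S.dep (S.pa v h)) (by omega) hdead rfl
    · rw [S.e_of_empty h]
      exact ⟨hv, S.e_of_empty h⟩

/-- Everything on the chain between a survivor and its segment root survives
and has the same segment root. -/
lemma e_between {b s : ℕ} {v x : W} (hv : S.srv b s v) (hx : S.Anc x v)
    (hd : S.dep (S.e b s v) ≤ S.dep x) : S.srv b s x ∧ S.e b s x = S.e b s v := by
  generalize hgen : S.dep v = d at *
  induction d using Nat.strong_induction_on generalizing v x with
  | _ d ih =>
    by_cases hxv : x = v
    · subst hxv; exact ⟨hv, rfl⟩
    · rcases Relation.ReflTransGen.cases_head hx with h1 | ⟨c, hc, hcx⟩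
      · exact absurd h1.symm hxv
      · obtain ⟨h, rfl⟩ := hc
        have hdlt : S.dep x < d := by
          rcases S.anc_cases hx with h2 | ⟨_, h2⟩
          · exact absurd h2 hxv
          · omega
        by_cases hdead : S.dep (S.pa v h) % b = s
        · exfalso
          rw [S.e_of_dead h hdead] at hd
          omega
        · rw [S.e_of_alive h hdead] at hd ⊢
          have hdp : S.dep (S.pa v h) + 1 = d := by have := S.dep_pa v h; omega
          exact ih (S.dep (S.pa v h)) (by omega) hdead hcx hd rfl

/-- Every depth below a vertex is attained by an ancestor. -/
lemma anc_at_dep (v : W) : ∀ d ≤ S.dep v, ∃ x, S.Anc x v ∧ S.dep x = d := by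
  generalize hgen : S.dep v = n at *
  induction n using Nat.strong_induction_on generalizing v with
  | _ n ih =>
    intro d hdn
    by_cases hdv : d = n
    · exact ⟨v, S.anc_refl v, by omega⟩
    · have hn : 0 < n := by omega
      have h : (S.AR v).Nonempty := by
        by_contra hc
        have := S.dep_of_empty hc
        omega
      have hdp : S.dep (S.pa v h) + 1 = n := by have := S.dep_pa v h; omega
      obtain ⟨x, hx1, hx2⟩ := ih (S.dep (S.pa v h)) (by omega) (S.pa v h) rfl d (by omega)
      exact ⟨x, S.anc_trans (Relation.ReflTransGen.single ⟨h, rfl⟩) hx1, hx2⟩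

/-- Any window of `b` consecutive integers contains the residue `s`. -/
lemma exists_mod {b s m n : ℕ} (hs : s < b) (h : m + b ≤ n + 1) :
    ∃ d, m ≤ d ∧ d ≤ n ∧ d % b = s := by
  have hm : b * (m / b) + m % b = m := Nat.div_add_mod m b
  set q := m / b
  set r := m % b with hr
  have hrb : r < b := Nat.mod_lt _ (by omega)
  by_cases hc : r ≤ s
  · refine ⟨b * q + s, by omega, by omega, ?_⟩
    rw [Nat.mul_add_mod]
    exact Nat.mod_eq_of_lt hs
  · refine ⟨b * (q + 1) + s, by nlinarith, by nlinarith, ?_⟩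
    rw [Nat.mul_add_mod]
    exact Nat.mod_eq_of_lt hs

/-- Segments have depth-span less than `b`. -/
lemma e_span {b s : ℕ} {v : W} (hs : s < b) (hv : S.srv b s v) :
    S.dep v < S.dep (S.e b s v) + b := by
  by_contra hcon
  push_neg at hcon
  obtain ⟨d, hd1, hd2, hd3⟩ := exists_mod hs (show S.dep (S.e b s v) + b ≤ S.dep v + 1 by omega)
  obtain ⟨x, hx1, hx2⟩ := S.anc_at_dep v d hd2
  have := S.e_between hv hx1 (by omega)
  exact this.1 (by rw [hx2]; exact hd3)

lemma e_lt_of_ne {b s : ℕ} {u v : W} (hu : S.srv b s u) (hv : S.srv b s v)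
    (hanc : S.Anc u v) (hne : S.e b s u ≠ S.e b s v) :
    S.dep u < S.dep (S.e b s v) := by
  by_contra hcon
  push_neg at hcon
  exact hne (S.e_between hv hanc hcon).2

end Setup

section Derived

variable (S : Setup W t) (b s : ℕ)

/-- Vertices of the derived graph: segment roots. -/
abbrev SVert : Type := {w : W // S.srv b s w ∧ S.e b s w = w}

/-- The derived graph on segment roots. -/
def dG : SimpleGraph (SVert S b s) where
  Adj σ σ' := σ ≠ σ' ∧ ∃ u v, S.G.Adj u v ∧ S.srv b s u ∧ S.srv b s v ∧
    S.e b s u = σ.1 ∧ S.e b s v = σ'.1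
  symm := by
    constructor
    rintro σ σ' ⟨hne, u, v, hadj, hu, hv, he1, he2⟩
    exact ⟨hne.symm, v, u, hadj.symm, hv, hu, he2, he1⟩
  loopless := by constructor; rintro σ ⟨hne, -⟩; exact hne rfl

/-- Bags of the derived decomposition. -/
def dbag (y : S.D.N) : Finset (SVert S b s) :=
  ((S.D.bag y).filter (fun w => S.srv b s w)).attach.image
    (fun w => ⟨S.e b s w.1,
      (S.e_srv (Finset.mem_filter.mp w.2).2).1, (S.e_srv (Finset.mem_filter.mp w.2).2).2⟩)

lemma mem_dbag {σ : SVert S b s} {y : S.D.N} :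
    σ ∈ dbag S b s y ↔ ∃ u, u ∈ S.D.bag y ∧ S.srv b s u ∧ S.e b s u = σ.1 := by
  constructor
  · intro h
    rw [dbag, Finset.mem_image] at h
    obtain ⟨w, _, hw⟩ := h
    have hmem := Finset.mem_filter.mp w.2
    exact ⟨w.1, hmem.1, hmem.2, congrArg Subtype.val hw⟩
  · rintro ⟨u, hmem, hsrv, he⟩
    rw [dbag, Finset.mem_image]
    refine ⟨⟨u, Finset.mem_filter.mpr ⟨hmem, hsrv⟩⟩, Finset.mem_attach _ _, ?_⟩
    exact Subtype.ext he

/-- Presence of a segment along ancestor chains of the decomposition tree. -/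
lemma seg_pres {u : W} {y : S.D.N} (hu : u ∈ S.D.bag y) :
    ∀ x, S.Anc x u → S.dep (S.e b s u) ≤ S.dep x →
    ∃ k, k ≤ S.D.depth y ∧ S.D.par^[k] y = S.D.tau x ∧
      ∀ j ≤ k, ∃ w, S.Anc w u ∧ S.dep (S.e b s u) ≤ S.dep w ∧ w ∈ S.D.bag (S.D.par^[j] y) := by
  intro x hx
  induction hx with
  | refl =>
    intro _
    obtain ⟨k, hk, he, hp⟩ := S.D.hanc u y hu
    exact ⟨k, hk, he, fun j hj => ⟨u, S.anc_refl u, S.e_dep_le b s u, hp j hj⟩⟩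
  | @tail c x h1 hstep ih =>
    intro hd
    have hstep' := hstep
    have hdc : S.dep c = S.dep x + 1 := S.step_dep hstep
    obtain ⟨kc, hkc, hec, hpc⟩ := ih (by omega)
    -- x = pa c is in the bag of tau c
    obtain ⟨hne, hpa⟩ := hstep
    have hxbag : x ∈ S.D.bag (S.D.tau c) := by
      have := S.mem_AR (S.pa_mem c hne)
      rw [hpa] at this
      exact this.2.1
    obtain ⟨k', hk', he', hp'⟩ := S.D.hanc x (S.D.tau c) hxbag
    have hdtc : S.D.depth (S.D.tau c) = S.D.depth y - kc := by
      rw [← hec, S.D.depth_iter]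
    refine ⟨k' + kc, by omega, ?_, ?_⟩
    · rw [Function.iterate_add_apply, hec, he']
    · intro j hj
      by_cases hjc : j ≤ kc
      · exact hpc j hjc
      · refine ⟨x, Relation.ReflTransGen.tail h1 hstep', hd, ?_⟩
        have hj' : j = (j - kc) + kc := by omega
        rw [hj', Function.iterate_add_apply, hec]
        exact hp' (j - kc) (by omega)

/-- Derived bags form connected-subtree-like families. -/
lemma dbag_anc {σ : SVert S b s} {y : S.D.N} (hσ : σ ∈ dbag S b s y) :
    ∃ k, k ≤ S.D.depth y ∧ S.D.par^[k] y = S.D.tau σ.1 ∧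
      ∀ j ≤ k, σ ∈ dbag S b s (S.D.par^[j] y) := by
  obtain ⟨u, hu, hsrv, he⟩ := (mem_dbag S b s).mp hσ
  have hranc : S.Anc (S.e b s u) u := S.e_anc b s u
  obtain ⟨k, hk, heq, hcov⟩ := seg_pres S b s hu (S.e b s u) hranc (le_refl _)
  refine ⟨k, hk, by rw [he] at heq; exact heq, ?_⟩
  intro j hj
  obtain ⟨w, hwanc, hwdep, hwbag⟩ := hcov j hj
  have hw := S.e_between hsrv hwanc hwdep
  rw [mem_dbag]
  exact ⟨w, hwbag, hw.1, by rw [hw.2, he]⟩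

/-- Members of a common derived bag have comparable roots. -/
lemma dbag_comparable {σ σ' : SVert S b s} {y : S.D.N}
    (h1 : σ ∈ dbag S b s y) (h2 : σ' ∈ dbag S b s y) :
    S.Anc σ.1 σ'.1 ∨ S.Anc σ'.1 σ.1 := by
  obtain ⟨u, hu, hsu, heu⟩ := (mem_dbag S b s).mp h1
  obtain ⟨u', hu', hsu', heu'⟩ := (mem_dbag S b s).mp h2
  have hcomp := S.bag_anc hu hu'
  rcases hcomp with h | h
  · -- Anc u u' : all of e u, e u' are ancestors of u'
    have ha1 : S.Anc σ.1 u' := heu ▸ S.anc_trans h (S.e_anc b s u)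
    have ha2 : S.Anc σ'.1 u' := heu' ▸ S.e_anc b s u'
    exact S.anc_linear ha1 ha2
  · have ha1 : S.Anc σ.1 u := heu ▸ S.e_anc b s u
    have ha2 : S.Anc σ'.1 u := heu' ▸ S.anc_trans h (S.e_anc b s u')
    exact S.anc_linear ha1 ha2

end Derived

section DerivedSucc

variable (S : Setup W (t+1)) (b s : ℕ)

/-- Width drop: derived bags have at most `t+1` elements. -/
lemma dbag_card (y : S.D.N) : (dbag S b s y).card ≤ t + 1 := by
  by_cases hbe : ((S.D.bag y).filter (fun w => S.srv b s w)).Nonempty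
  · -- the bag is nonempty; take its maximal-rank element x
    have hBg : (S.D.bag y).Nonempty := by
      obtain ⟨w, hw⟩ := hbe
      exact ⟨w, (Finset.mem_filter.mp hw).1⟩
    obtain ⟨x, hxmem, hxmax⟩ := Finset.exists_max_image (S.D.bag y) S.rnk hBg
    -- every other member of the bag is a guardian of x
    have hAR : ∀ u ∈ S.D.bag y, u ≠ x → u ∈ S.AR x := by
      intro u hu hne
      have hcomp := S.hguard y u hu x hxmem
      have hRux : S.R u x := by
        rcases hcomp with h | h
        · exact h
        · exfalso
          have hlt := S.rnk_lt_of_R h (Ne.symm hne)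
          have hle := hxmax u hu
          exact absurd hle (not_le.mpr hlt)
      rw [Setup.AR, Finset.mem_filter, Setup.mem_A_iff]
      exact ⟨⟨hne, S.D.mem_bag_tau hu hxmem (S.hmono u x hRux)⟩, hRux⟩
    -- define the target finset T by cases and inject
    suffices h : ∃ T : Finset W, T.card ≤ t + 1 ∧ ∀ σ ∈ dbag S b s y, σ.1 ∈ T by
      obtain ⟨T, hT1, hT2⟩ := h
      calc (dbag S b s y).card ≤ T.card := by
            apply Finset.card_le_card_of_injOn Subtype.val hT2
            exact Subtype.val_injective.injOn
        _ ≤ t + 1 := hT1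
    have hcardA : (S.AR x).card ≤ t + 1 := by
      have h1 : (S.AR x).card ≤ (S.A x).card := Finset.card_filter_le _ _
      have h2 := S.card_A x
      omega
    by_cases hxs : S.srv b s x
    · by_cases hARne : (S.AR x).Nonempty
      · by_cases hpas : S.srv b s (S.pa x hARne)
        · -- x survives, parent survives: e x = e (pa x)
          refine ⟨((S.AR x).filter (fun w => S.srv b s w)).image (S.e b s),
            le_trans (Finset.card_image_le) (le_trans (Finset.card_filter_le _ _) hcardA), ?_⟩
          intro σ hσ
          obtain ⟨u, hu, hsu, heu⟩ := (mem_dbag S b s).mp hσ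
          by_cases hux : u = x
          · rw [← heu, hux, S.e_of_alive hARne hpas]
            exact Finset.mem_image_of_mem _
              (Finset.mem_filter.mpr ⟨S.pa_mem x hARne, hpas⟩)
          · rw [← heu]
            exact Finset.mem_image_of_mem _
              (Finset.mem_filter.mpr ⟨hAR u hu hux, hsu⟩)
        · -- x survives, parent dead
          refine ⟨insert (S.e b s x)
            ((((S.AR x).erase (S.pa x hARne)).filter (fun w => S.srv b s w)).image (S.e b s)), ?_, ?_⟩
          · have h1 : (((S.AR x).erase (S.pa x hARne)).filter
                (fun w => S.srv b s w)).card ≤ ((S.AR x).erase (S.pa x hARne)).card :=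
              Finset.card_filter_le _ _
            have h2 : ((S.AR x).erase (S.pa x hARne)).card = (S.AR x).card - 1 :=
              Finset.card_erase_of_mem (S.pa_mem x hARne)
            have h3 := Finset.card_insert_le (S.e b s x)
              ((((S.AR x).erase (S.pa x hARne)).filter (fun w => S.srv b s w)).image (S.e b s))
            have h4 : ((((S.AR x).erase (S.pa x hARne)).filter
                (fun w => S.srv b s w)).image (S.e b s)).card ≤
                (((S.AR x).erase (S.pa x hARne)).filter (fun w => S.srv b s w)).card :=
              Finset.card_image_le
            have hpos : 0 < (S.AR x).card := Finset.card_pos.mpr hARne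
            omega
          · intro σ hσ
            obtain ⟨u, hu, hsu, heu⟩ := (mem_dbag S b s).mp hσ
            by_cases hux : u = x
            · subst hux; rw [← heu]; exact Finset.mem_insert_self _ _
            · apply Finset.mem_insert_of_mem
              rw [← heu]
              refine Finset.mem_image_of_mem _ (Finset.mem_filter.mpr ⟨?_, hsu⟩)
              refine Finset.mem_erase.mpr ⟨?_, hAR u hu hux⟩
              intro hupa
              rw [hupa] at hsu
              exact hpas hsu
      · -- AR x empty: the bag is {x}
        refine ⟨{S.e b s x}, by simp, ?_⟩
        intro σ hσ
        obtain ⟨u, hu, hsu, heu⟩ := (mem_dbag S b s).mp hσ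
        have hux : u = x := by
          by_contra hne
          exact hARne ⟨u, hAR u hu hne⟩
        subst hux
        rw [← heu]; exact Finset.mem_singleton_self _
    · -- x does not survive
      refine ⟨((S.AR x).filter (fun w => S.srv b s w)).image (S.e b s),
        le_trans (Finset.card_image_le) (le_trans (Finset.card_filter_le _ _) hcardA), ?_⟩
      intro σ hσ
      obtain ⟨u, hu, hsu, heu⟩ := (mem_dbag S b s).mp hσ
      have hux : u ≠ x := by rintro rfl; exact hxs hsu
      rw [← heu]
      exact Finset.mem_image_of_mem _ (Finset.mem_filter.mpr ⟨hAR u hu hux, hsu⟩)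
  · -- empty filtered bag : empty derived bag
    have : dbag S b s y = ∅ := by
      rw [Finset.eq_empty_iff_forall_notMem]
      intro σ hσ
      obtain ⟨u, hu, hsu, -⟩ := (mem_dbag S b s).mp hσ
      exact hbe ⟨u, Finset.mem_filter.mpr ⟨hu, hsu⟩⟩
    rw [this]; simp

/-- The derived decomposition, of width one less. -/
def dD : RDec (SVert S b s) (dG S b s) t where
  N := S.D.N
  depth := S.D.depth
  par := S.D.par
  hroot := S.D.hroot
  hpar := S.D.hpar
  bag := dbag S b s
  tau σ := S.D.tau σ.1
  htau σ := (mem_dbag S b s).mpr ⟨σ.1, S.D.htau σ.1, σ.2.1, σ.2.2⟩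
  hanc σ y hσ := by
    obtain ⟨k, h1, h2, h3⟩ := dbag_anc S b s hσ
    exact ⟨k, h1, h2, h3⟩
  hedge := by
    rintro σ σ' ⟨hne, u, v, hadj, hu, hv, he1, he2⟩
    obtain ⟨y, hy1, hy2⟩ := S.D.hedge hadj
    exact ⟨y, (mem_dbag S b s).mpr ⟨u, hy1, hu, he1⟩, (mem_dbag S b s).mpr ⟨v, hy2, hv, he2⟩⟩
  hcard := dbag_card S b s

/-- The derived setup. -/
def dSetup : Setup (SVert S b s) t where
  G := dG S b s
  D := dD S b s
  R σ σ' := S.Anc σ.1 σ'.1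
  th σ := S.dep σ.1 * (Fintype.card W + 1) + (Fintype.equivFin W σ.1 : ℕ)
  hRrefl σ := S.anc_refl σ.1
  hRtrans := by intro a c d h1 h2; exact S.anc_trans h2 h1
  hRchain := by intro v x y h1 h2; exact S.anc_linear h1 h2
  hguard := by
    intro y σ h1 σ' h2
    exact dbag_comparable S b s h1 h2
  hmono := by
    intro σ σ' h
    exact S.hmono σ.1 σ'.1 (S.anc_R h)
  hth := by
    intro σ σ' h hne
    have hne1 : σ.1 ≠ σ'.1 := fun hc => hne (Subtype.ext hc)
    have hdep : S.dep σ.1 < S.dep σ'.1 := by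
      rcases S.anc_cases h with h1 | ⟨-, h1⟩
      · exact absurd h1 hne1
      · exact h1
    have hcard1 : (Fintype.equivFin W σ.1 : ℕ) < Fintype.card W + 1 :=
      Nat.lt_succ_of_lt (Fintype.equivFin W σ.1).2
    have hcard2 : (Fintype.equivFin W σ'.1 : ℕ) < Fintype.card W + 1 :=
      Nat.lt_succ_of_lt (Fintype.equivFin W σ'.1).2
    nlinarith

end DerivedSucc

section Assembly

variable (S : Setup W t) (b s : ℕ)

/-- The root of a survivor's segment, as a vertex of the derived graph. -/
def er (u : W) (hu : S.srv b s u) : SVert S b s :=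
  ⟨S.e b s u, (S.e_srv hu).1, (S.e_srv hu).2⟩

@[simp] lemma er_val (u : W) (hu : S.srv b s u) : (er S b s u hu).1 = S.e b s u := rfl

/-- The deleted set determined by the cut residue `s` and a set `Y` of deleted
segments. -/
def asm (Y : Finset (SVert S b s)) : Finset W :=
  Finset.univ.filter (fun w => S.dep w % b = s ∨ ∃ σ ∈ Y, (σ : SVert S b s).1 = S.e b s w)

lemma not_mem_asm {Y : Finset (SVert S b s)} {w : W} :
    w ∉ asm S b s Y ↔ S.srv b s w ∧ ∀ σ ∈ Y, (σ : SVert S b s).1 ≠ S.e b s w := by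
  rw [asm]
  simp only [Finset.mem_filter, Finset.mem_univ, true_and]
  rw [Setup.srv]
  push_neg
  tauto

lemma er_not_mem {Y : Finset (SVert S b s)} {w : W} (h : w ∉ asm S b s Y)
    (hw : S.srv b s w) : er S b s w hw ∉ Y := by
  intro hc
  exact ((not_mem_asm S b s).mp h).2 _ hc rfl

lemma srv_of_not_mem_asm {Y : Finset (SVert S b s)} {w : W} (h : w ∉ asm S b s Y) :
    S.srv b s w := ((not_mem_asm S b s).mp h).1

end Assembly

lemma mod_eq_bound {b x y : ℕ} (h : x ≤ y) (hlt : y < x + b) (hm : x % b = y % b) :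
    x = y := by
  rcases Nat.eq_zero_or_pos b with rfl | hb
  · omega
  have hx := Nat.div_add_mod x b
  have hy := Nat.div_add_mod y b
  have hq : x / b ≤ y / b := Nat.div_le_div_right h
  have hq2 : y / b ≤ x / b := by
    by_contra hc
    push_neg at hc
    have : x / b + 1 ≤ y / b := hc
    have : b * (x / b + 1) ≤ b * (y / b) := Nat.mul_le_mul_left b this
    nlinarith [Nat.mod_lt x hb, Nat.mod_lt y hb]
  have heq : x / b = y / b := le_antisymm hq hq2
  have e1 : b * (x / b) = b * (y / b) := by rw [heq]
  omega

/-- The key lifting lemma: from a forest order on surviving segment roots,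
build a forest order on the surviving vertices. -/
lemma build_le (S : Setup W t) {b s : ℕ} (hs : s < b)
    (Y : Finset (SVert S b s)) (le' : SVert S b s → SVert S b s → Prop)
    (h'refl : Reflexive le') (h'trans : Transitive le') (h'anti : AntiSymmetric le')
    (h'chain : ∀ v x y, le' x v → le' y v → le' x y ∨ le' y x)
    (h'edge : ∀ u v, u ∉ Y → v ∉ Y → (dG S b s).Adj u v → le' u v ∨ le' v u)
    (h'R : ∀ u v, le' u v → u ≠ v → S.Anc u.1 v.1 ∧ u ∉ Y ∧ v ∉ Y)
    (ρ' : ℕ) (hρ : 0 < ρ') (h'card : ∀ σ, {σ' | le' σ' σ}.ncard ≤ ρ') :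
    ∃ le : W → W → Prop,
      Reflexive le ∧ Transitive le ∧ AntiSymmetric le ∧
      (∀ v x y, le x v → le y v → le x y ∨ le y x) ∧
      (∀ u v, u ∉ asm S b s Y → v ∉ asm S b s Y → S.G.Adj u v → le u v ∨ le v u) ∧
      (∀ u v, le u v → u ≠ v → S.R u v ∧ u ∉ asm S b s Y ∧ v ∉ asm S b s Y) ∧
      (∀ v, {u | le u v}.ncard ≤ b * ρ') := by
  classical
  set A := asm S b s Y with hA
  -- the order
  set le : W → W → Prop := fun u v => u = v ∨ (u ∉ A ∧ v ∉ A ∧ S.Anc u v ∧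
    (S.e b s u = S.e b s v ∨ ∃ (hu : S.srv b s u) (hv : S.srv b s v),
      le' (er S b s u hu) (er S b s v hv) ∧ S.e b s u ≠ S.e b s v)) with hle
  have hb : 0 < b := by omega
  -- helper: the nontrivial branch gives ancestry
  have anc_of_le : ∀ {u v}, le u v → S.Anc u v := by
    intro u v h
    rcases h with rfl | ⟨-, -, h, -⟩
    · exact S.anc_refl u
    · exact h
  -- the key chain claim
  have chain_key : ∀ v x y, le x v → le y v → x ≠ v → y ≠ v → x ≠ y →
      S.Anc x y → le x y := by
    intro v x y hx hy hxv hyv hxy hanc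
    rcases hx with rfl | ⟨hxA, hvA, hxanc, hxe⟩
    · exact absurd rfl hxv
    rcases hy with rfl | ⟨hyA, -, hyanc, hye⟩
    · exact absurd rfl hyv
    have hxs : S.srv b s x := srv_of_not_mem_asm S b s hxA
    have hys : S.srv b s y := srv_of_not_mem_asm S b s hyA
    have hvs : S.srv b s v := srv_of_not_mem_asm S b s hvA
    rcases hxe with hxe | ⟨hx1, hv1, hxlt, hxne⟩
    · rcases hye with hye | ⟨hy1, hv1, hylt, hyne⟩
      · -- both in v's segment
        exact Or.inr ⟨hxA, hyA, hanc, Or.inl (hxe.trans hye.symm)⟩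
      · -- x in v's segment, y not: impossible since y is between x and v
        exfalso
        have hd1 : S.dep (S.e b s v) ≤ S.dep x := by
          have := S.e_dep_le b s x
          rw [hxe] at this
          exact this
        have hd2 : S.dep x ≤ S.dep y := S.anc_dep_le hanc
        have := S.e_between hvs hyanc (by omega)
        exact hyne this.2
    · rcases hye with hye | ⟨hy1, hv1', hylt, hyne⟩
      · -- y in v's segment: er y = er v
        refine Or.inr ⟨hxA, hyA, hanc, Or.inr ⟨hx1, hys, ?_, ?_⟩⟩
        · have : er S b s y hys = er S b s v hv1 := Subtype.ext (by simp [hye])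
          rw [this]
          exact hxlt
        · rw [hye]; exact hxne
      · -- both strictly below v's segment in le'
        rcases h'chain (er S b s v hv1) _ _ hxlt hylt with hcmp | hcmp
        · by_cases heq : S.e b s x = S.e b s y
          · exact Or.inr ⟨hxA, hyA, hanc, Or.inl heq⟩
          · exact Or.inr ⟨hxA, hyA, hanc, Or.inr ⟨hx1, hy1, hcmp, heq⟩⟩
        · by_cases heq : S.e b s x = S.e b s y
          · exact Or.inr ⟨hxA, hyA, hanc, Or.inl heq⟩
          · -- le' (er y) (er x) strictly: contradiction
            exfalso
            have hner : er S b s y hy1 ≠ er S b s x hx1 := by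
              intro hc
              exact heq (congrArg Subtype.val hc).symm
            have hR := h'R _ _ hcmp hner
            have hancyx : S.Anc (S.e b s y) (S.e b s x) := hR.1
            -- but x is on y's chain above the root of y's segment
            have hd1 : S.dep (S.e b s y) ≤ S.dep (S.e b s x) := S.anc_dep_le hancyx
            have hd2 : S.dep (S.e b s x) ≤ S.dep x := S.e_dep_le b s x
            have := S.e_between hys hanc (by omega)
            exact heq this.2
  refine ⟨le, ?_, ?_, ?_, ?_, ?_, ?_, ?_⟩
  · intro u; exact Or.inl rfl
  · -- transitivity
    rintro u v w (rfl | ⟨huA, hvA, huv, hue⟩) hvw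
    · exact hvw
    rcases hvw with rfl | ⟨-, hwA, hvw, hve⟩
    · exact Or.inr ⟨huA, hvA, huv, hue⟩
    refine Or.inr ⟨huA, hwA, S.anc_trans hvw huv, ?_⟩
    rcases hue with hue | ⟨hu1, hv1, hult, hune⟩
    · rcases hve with hve | ⟨hv1, hw1, hvlt, hvne⟩
      · exact Or.inl (hue.trans hve)
      · refine Or.inr ⟨srv_of_not_mem_asm S b s huA, hw1, ?_, by rw [hue]; exact hvne⟩
        have : er S b s u (srv_of_not_mem_asm S b s huA) = er S b s v hv1 :=
          Subtype.ext (by simp [hue])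
        rw [this]; exact hvlt
    · rcases hve with hve | ⟨hv1', hw1, hvlt, hvne⟩
      · refine Or.inr ⟨hu1, srv_of_not_mem_asm S b s hwA, ?_, by rw [← hve]; exact hune⟩
        have : er S b s w (srv_of_not_mem_asm S b s hwA) = er S b s v hv1 :=
          Subtype.ext (by simp [hve])
        rw [this]; exact hult
      · by_cases heq : S.e b s u = S.e b s w
        · exact Or.inl heq
        · refine Or.inr ⟨hu1, hw1, ?_, heq⟩
          have : er S b s v hv1 = er S b s v hv1' := rfl
          exact h'trans hult (this ▸ hvlt)
  · -- antisymmetry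
    rintro u v (rfl | ⟨-, -, huv, -⟩) hvu
    · rfl
    rcases hvu with rfl | ⟨-, -, hvu, -⟩
    · rfl
    · exact S.anc_antisymm huv hvu
  · -- chain condition
    intro v x y hx hy
    by_cases hxv : x = v
    · subst hxv; exact Or.inr hy
    by_cases hyv : y = v
    · subst hyv; exact Or.inl hx
    by_cases hxy : x = y
    · exact Or.inl (Or.inl hxy)
    have hxanc := anc_of_le hx
    have hyanc := anc_of_le hy
    rcases S.anc_linear hxanc hyanc with h | h
    · exact Or.inl (chain_key v x y hx hy hxv hyv hxy h)
    · exact Or.inr (chain_key v y x hy hx hyv hxv (Ne.symm hxy) h)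
  · -- edges
    intro u v huA hvA hadj
    have hus : S.srv b s u := srv_of_not_mem_asm S b s huA
    have hvs : S.srv b s v := srv_of_not_mem_asm S b s hvA
    -- WLOG via a helper
    have key : ∀ u v, u ∉ A → v ∉ A → S.G.Adj u v → S.Anc u v → le u v := by
      intro u v huA hvA hadj hanc
      have hus : S.srv b s u := srv_of_not_mem_asm S b s huA
      have hvs : S.srv b s v := srv_of_not_mem_asm S b s hvA
      by_cases heq : S.e b s u = S.e b s v
      · exact Or.inr ⟨huA, hvA, hanc, Or.inl heq⟩
      · have hner : er S b s u hus ≠ er S b s v hvs := by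
          intro hc; exact heq (congrArg Subtype.val hc)
        have hadj' : (dG S b s).Adj (er S b s u hus) (er S b s v hvs) :=
          ⟨hner, u, v, hadj, hus, hvs, rfl, rfl⟩
        rcases h'edge _ _ (er_not_mem S b s huA hus) (er_not_mem S b s hvA hvs) hadj' with
          hcmp | hcmp
        · exact Or.inr ⟨huA, hvA, hanc, Or.inr ⟨hus, hvs, hcmp, heq⟩⟩
        · exfalso
          have hR := h'R _ _ hcmp (Ne.symm hner)
          have : S.dep u < S.dep (S.e b s v) := S.e_lt_of_ne hus hvs hanc heq
          have h1 : S.dep (S.e b s v) ≤ S.dep (S.e b s u) := S.anc_dep_le hR.1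
          have h2 : S.dep (S.e b s u) ≤ S.dep u := S.e_dep_le b s u
          omega
    rcases S.edge_anc hadj with h | h
    · exact Or.inl (key u v huA hvA hadj h)
    · exact Or.inr (key v u hvA huA hadj.symm h)
  · -- compatibility with R and the deleted set
    rintro u v (rfl | ⟨huA, hvA, hanc, -⟩) hne
    · exact absurd rfl hne
    · exact ⟨S.anc_R hanc, huA, hvA⟩
  · -- downset bound
    intro v
    by_cases hvA : v ∈ A
    · have : {u | le u v} = {v} := by
        ext u
        simp only [Set.mem_setOf_eq, Set.mem_singleton_iff]
        constructor
        · rintro (rfl | ⟨-, hvA', -, -⟩)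
          · rfl
          · exact absurd hvA hvA'
        · rintro rfl; exact Or.inl rfl
      rw [this, Set.ncard_singleton]
      exact Nat.one_le_iff_ne_zero.mpr (by positivity)
    · have hvs : S.srv b s v := srv_of_not_mem_asm S b s hvA
      -- inject the downset into (downset of er v) × (range b)
      have hset : {u | le u v} = ↑(Finset.univ.filter (fun u => le u v)) := by
        ext u; simp
      rw [hset, Set.ncard_coe_finset]
      set F := Finset.univ.filter (fun σ => le' σ (er S b s v hvs)) with hF
      have hFcard : F.card ≤ ρ' := by
        have : {σ' | le' σ' (er S b s v hvs)} = ↑F := by ext σ; simp [hF]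
        have h := h'card (er S b s v hvs)
        rw [this, Set.ncard_coe_finset] at h
        exact h
      have hmain : (Finset.univ.filter (fun u => le u v)).card ≤ (F ×ˢ Finset.range b).card := by
        apply Finset.card_le_card_of_injOn
          (fun u => (if h : S.srv b s u then er S b s u h else er S b s v hvs, S.dep u % b))
        · intro u hu
          rw [Finset.mem_coe, Finset.mem_filter] at hu
          have hu := hu.2
          rw [Finset.mem_coe, Finset.mem_product]
          dsimp only
          constructor
          · rcases hu with rfl | ⟨huA, -, -, hue⟩
            · rw [dif_pos hvs]
              simp only [hF, Finset.mem_filter, Finset.mem_univ, true_and]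
              exact h'refl _
            · have hus : S.srv b s u := srv_of_not_mem_asm S b s huA
              rw [dif_pos hus]
              simp only [hF, Finset.mem_filter, Finset.mem_univ, true_and]
              rcases hue with hue | ⟨hu1, hv1, hult, -⟩
              · have : er S b s u hus = er S b s v hvs := Subtype.ext (by simp [hue])
                rw [this]; exact h'refl _
              · exact hult
          · simp only [Finset.mem_range]
            exact Nat.mod_lt _ hb
        · intro u hu u' hu' heq
          simp only [Finset.coe_filter, Set.mem_setOf_eq] at hu hu'
          have hu := hu.2
          have hu' := hu'.2
          have hus : S.srv b s u := by
            rcases hu with rfl | ⟨h1, -, -, -⟩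
            · exact hvs
            · exact srv_of_not_mem_asm S b s h1
          have hu's : S.srv b s u' := by
            rcases hu' with rfl | ⟨h1, -, -, -⟩
            · exact hvs
            · exact srv_of_not_mem_asm S b s h1
          dsimp only at heq
          rw [dif_pos hus, dif_pos hu's] at heq
          have he : S.e b s u = S.e b s u' := congrArg Subtype.val (congrArg Prod.fst heq)
          have hm : S.dep u % b = S.dep u' % b := congrArg Prod.snd heq
          have hancu : S.Anc u v := anc_of_le hu
          have hancu' : S.Anc u' v := anc_of_le hu'
          -- u and u' are comparable; same segment, same residue, span < b forces equality
          have key2 : ∀ u u', S.srv b s u → S.srv b s u' → S.Anc u u' →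
              S.e b s u = S.e b s u' → S.dep u % b = S.dep u' % b → u = u' := by
            intro u u' hus hu's hanc he hm
            have h1 : S.dep u ≤ S.dep u' := S.anc_dep_le hanc
            have h2 : S.dep (S.e b s u') ≤ S.dep u := by
              rw [← he]; exact S.e_dep_le b s u
            have h3 : S.dep u' < S.dep (S.e b s u') + b := S.e_span hs hu's
            have : S.dep u = S.dep u' := mod_eq_bound h1 (by omega) hm
            exact S.anc_dep_eq hanc this
          rcases S.anc_linear hancu hancu' with h | h
          · exact key2 u u' hus hu's h he hm
          · exact (key2 u' u hu's hus h he.symm hm.symm).symm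
      have hprod : (F ×ˢ Finset.range b).card = F.card * b := by
        rw [Finset.card_product, Finset.card_range]
      rw [hprod] at hmain
      calc (Finset.univ.filter (fun u => le u v)).card ≤ F.card * b := hmain
        _ ≤ ρ' * b := Nat.mul_le_mul_right b hFcard
        _ = b * ρ' := Nat.mul_comm _ _

/-- The inductive statement. -/
abbrev Concl {W : Type} [Fintype W] [DecidableEq W] {t : ℕ} (S : Setup W t)
    (a : ℕ) (ρ : ℕ) : Prop :=
  ∃ P : Finset W → ℝ,
    (∀ X, 0 ≤ P X) ∧ (∑ X : Finset W, P X) = 1 ∧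
    (∀ X : Finset W, P X ≠ 0 → ∃ le : W → W → Prop,
      Reflexive le ∧ Transitive le ∧ AntiSymmetric le ∧
      (∀ v x y, le x v → le y v → le x y ∨ le y x) ∧
      (∀ u v, u ∉ X → v ∉ X → S.G.Adj u v → le u v ∨ le v u) ∧
      (∀ u v, le u v → u ≠ v → S.R u v ∧ u ∉ X ∧ v ∉ X) ∧
      (∀ v, {u | le u v}.ncard ≤ ρ)) ∧
    (∀ v : W, (∑ X ∈ Finset.univ.filter (fun X : Finset W => v ∈ X), P X) ≤ 1 / (a : ℝ))

theorem core (t : ℕ) : ∀ (W : Type) [Fintype W] [DecidableEq W] (S : Setup W t) (a : ℕ),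
    0 < a → Concl S a (rate t a) := by
  induction t with
  | zero =>
    intro W _ _ S a ha
    refine ⟨fun X => if X = ∅ then 1 else 0, ?_, ?_, ?_, ?_⟩
    · intro X; dsimp only; split <;> norm_num
    · simp
    · intro X hX
      have hXe : X = ∅ := by
        by_contra hc
        exact hX (if_neg hc)
      subst hXe
      refine ⟨Eq, ?_, ?_, ?_, ?_, ?_, ?_, ?_⟩
      · exact fun _ => rfl
      · exact fun _ _ _ h1 h2 => h1.trans h2
      · exact fun _ _ h1 _ => h1
      · intro v x y hx hy; exact Or.inl (hx.trans hy.symm)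
      · intro u v _ _ hadj
        exfalso
        obtain ⟨y, hu, hv⟩ := S.D.hedge hadj
        have h1 : 1 < (S.D.bag y).card :=
          Finset.one_lt_card.mpr ⟨u, hu, v, hv, hadj.ne⟩
        have h2 := S.D.hcard y
        omega
      · intro u v h hne; exact absurd h hne
      · intro v
        have : {u | u = v} = {v} := by ext u; simp
        rw [this, Set.ncard_singleton, rate]
    · intro v
      have : ∀ X ∈ Finset.univ.filter (fun X : Finset W => v ∈ X),
          (if X = ∅ then (1:ℝ) else 0) = 0 := by
        intro X hX
        rw [Finset.mem_filter] at hX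
        exact if_neg (Finset.ne_empty_of_mem hX.2)
      rw [Finset.sum_congr rfl this]
      simp
  | succ t IH =>
    intro W _ _ S a ha
    have hb0 : 0 < 2 * a := by omega
    set b : ℕ := 2 * a with hbdef
    have hIH : ∀ s : ℕ, Concl (dSetup S b s) (2*a) (rate t (2*a)) :=
      fun s => IH (SVert S b s) (dSetup S b s) (2*a) (by omega)
    choose P' hP1 hP2 hP3 hP4 using hIH
    set P : Finset W → ℝ := fun X =>
      (∑ s ∈ Finset.range b, ∑ Y ∈ Finset.univ.filter
          (fun Y : Finset (SVert S b s) => asm S b s Y = X), P' s Y) / (b : ℝ) with hPdef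
    have hPnn : ∀ X, 0 ≤ P X := by
      intro X
      apply div_nonneg _ (by positivity)
      apply Finset.sum_nonneg; intro s _
      apply Finset.sum_nonneg; intro Y _
      exact hP1 s Y
    refine ⟨P, hPnn, ?_, ?_, ?_⟩
    · -- total mass
      rw [hPdef]
      simp only
      rw [← Finset.sum_div]
      rw [Finset.sum_comm]
      have : ∀ s ∈ Finset.range b,
          (∑ X : Finset W, ∑ Y ∈ Finset.univ.filter
            (fun Y : Finset (SVert S b s) => asm S b s Y = X), P' s Y) = 1 := by
        intro s _
        rw [Finset.sum_fiberwise_eq_sum_filter Finset.univ Finset.univ (asm S b s) (P' s)]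
        rw [Finset.filter_true_of_mem (fun Y _ => Finset.mem_univ _)]
        exact hP2 s
      rw [Finset.sum_congr rfl this]
      rw [Finset.sum_const, Finset.card_range]
      field_simp
      simp
    · -- support
      intro X hX
      have hex : ∃ s ∈ Finset.range b, ∃ Y ∈ Finset.univ.filter
          (fun Y : Finset (SVert S b s) => asm S b s Y = X), P' s Y ≠ 0 := by
        by_contra hc
        push_neg at hc
        apply hX
        rw [hPdef]
        simp only
        rw [Finset.sum_eq_zero, zero_div]
        intro s hs
        exact Finset.sum_eq_zero (fun Y hY => hc s hs Y hY)
      obtain ⟨s, hs, Y, hY, hPY⟩ := hex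
      rw [Finset.mem_filter] at hY
      obtain ⟨-, rfl⟩ := hY
      obtain ⟨le', h1, h2, h3, h4, h5, h6, h7⟩ := hP3 s Y hPY
      obtain ⟨le, l1, l2, l3, l4, l5, l6, l7⟩ :=
        build_le S (Finset.mem_range.mp hs) Y le' h1 h2 h3 h4 h5 h6
          (rate t (2*a)) (rate_pos t (2*a) (by omega)) h7
      refine ⟨le, l1, l2, l3, l4, l5, l6, ?_⟩
      intro v
      refine le_trans (l7 v) ?_
      rw [rate]
    · -- marginals
      intro v
      have hre : (∑ X ∈ Finset.univ.filter (fun X : Finset W => v ∈ X), P X)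
          = (∑ s ∈ Finset.range b, ∑ Y ∈ Finset.univ.filter
              (fun Y : Finset (SVert S b s) => v ∈ asm S b s Y), P' s Y) / (b : ℝ) := by
        rw [hPdef]
        simp only
        rw [← Finset.sum_div]
        congr 1
        rw [Finset.sum_comm]
        apply Finset.sum_congr rfl
        intro s _
        rw [Finset.sum_fiberwise_eq_sum_filter Finset.univ
          (Finset.univ.filter (fun X : Finset W => v ∈ X)) (asm S b s) (P' s)]
        apply Finset.sum_congr _ (fun _ _ => rfl)
        apply Finset.filter_congr
        intro Y _
        simp only [eq_iff_iff, Finset.mem_filter, Finset.mem_univ, true_and]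
      rw [hre]
      have hterm : ∀ s ∈ Finset.range b,
          (∑ Y ∈ Finset.univ.filter
            (fun Y : Finset (SVert S b s) => v ∈ asm S b s Y), P' s Y)
          ≤ (if S.dep v % b = s then 1 else 0) + 1/(b:ℝ) := by
        intro s _
        by_cases hsv : S.dep v % b = s
        · rw [if_pos hsv]
          have hle : (∑ Y ∈ Finset.univ.filter
              (fun Y : Finset (SVert S b s) => v ∈ asm S b s Y), P' s Y)
              ≤ ∑ Y : Finset (SVert S b s), P' s Y :=
            Finset.sum_le_sum_of_subset_of_nonneg (Finset.filter_subset _ _)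
              (fun Y _ _ => hP1 s Y)
          rw [hP2 s] at hle
          have : (0:ℝ) ≤ 1/(b:ℝ) := by positivity
          linarith
        · rw [if_neg hsv]
          have hvs : S.srv b s v := hsv
          have hcong : Finset.univ.filter
              (fun Y : Finset (SVert S b s) => v ∈ asm S b s Y)
              = Finset.univ.filter (fun Y => er S b s v hvs ∈ Y) := by
            apply Finset.filter_congr
            intro Y _
            constructor
            · intro h
              rw [asm, Finset.mem_filter] at h
              rcases h.2 with h | ⟨σ, hσY, hσe⟩
              · exact absurd h hsv
              · have : σ = er S b s v hvs := Subtype.ext hσe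
                rw [← this]; exact hσY
            · intro h
              rw [asm, Finset.mem_filter]
              exact ⟨Finset.mem_univ _, Or.inr ⟨er S b s v hvs, h, rfl⟩⟩
          rw [hcong]
          have := hP4 s (er S b s v hvs)
          have hcast : ((2*a : ℕ) : ℝ) = (b : ℝ) := by rw [hbdef]
          rw [hcast] at this
          linarith
      have hsum : (∑ s ∈ Finset.range b, ∑ Y ∈ Finset.univ.filter
            (fun Y : Finset (SVert S b s) => v ∈ asm S b s Y), P' s Y)
          ≤ 2 := by
        calc (∑ s ∈ Finset.range b, ∑ Y ∈ Finset.univ.filter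
              (fun Y : Finset (SVert S b s) => v ∈ asm S b s Y), P' s Y)
            ≤ ∑ s ∈ Finset.range b, ((if S.dep v % b = s then 1 else 0) + 1/(b:ℝ)) :=
              Finset.sum_le_sum hterm
          _ = 1 + 1 := by
              rw [Finset.sum_add_distrib]
              rw [Finset.sum_ite_eq (Finset.range b) (S.dep v % b) (fun _ => (1:ℝ))]
              rw [if_pos (Finset.mem_range.mpr (Nat.mod_lt _ hb0))]
              rw [Finset.sum_const, Finset.card_range, nsmul_eq_mul]
              have hbne : (b:ℝ) ≠ 0 := Nat.cast_ne_zero.mpr (by omega)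
              field_simp
          _ = 2 := by norm_num
      have hbpos : (0:ℝ) < (b:ℝ) := by positivity
      rw [div_le_iff₀ hbpos]
      have hane : (a:ℝ) ≠ 0 := Nat.cast_ne_zero.mpr (by omega)
      have hmul : (1:ℝ)/(a:ℝ) * (b:ℝ) = 2 := by
        rw [hbdef]
        push_cast
        field_simp
        try ring
      rw [hmul]
      exact hsum

/-- Extraction: from a tree decomposition of width `t`, build a `Setup`. -/
theorem exists_setup {V : Type} [Fintype V] [DecidableEq V] (G : SimpleGraph V) (t : ℕ)
    (htw : TreewidthLE G t) (hne : Nonempty V) : ∃ S : Setup V t, S.G = G := by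
  classical
  obtain ⟨Dc, hDc⟩ := htw
  obtain ⟨v₀⟩ := hne
  obtain ⟨r, hr⟩ := Dc.mem_bag v₀
  have hEU := Dc.tree.existsUnique_path
  set pth : ∀ y : Dc.ι, Dc.t.Walk y r := fun y => ((hEU y r).exists).choose with hpthdef
  have hpath : ∀ y, (pth y).IsPath := fun y => ((hEU y r).exists).choose_spec
  have huniq : ∀ y (p : Dc.t.Walk y r), p.IsPath → p = pth y :=
    fun y p hp => (hEU y r).unique hp (hpath y)
  set depth : Dc.ι → ℕ := fun y => (pth y).length with hdepthdef
  set par : Dc.ι → Dc.ι := fun y => (pth y).getVert 1 with hpardef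
  -- basic facts
  have hnil : pth r = SimpleGraph.Walk.nil := (huniq r _ SimpleGraph.Walk.IsPath.nil).symm
  have hdr : depth r = 0 := by rw [hdepthdef]; simp [hnil]
  have hy_r : ∀ y, depth y = 0 → y = r := fun y h => SimpleGraph.Walk.eq_of_length_eq_zero h
  have hroot : ∀ y, depth y = 0 → par y = y := by
    intro y h
    have hyr := hy_r y h
    subst hyr
    rw [hpardef]
    simp only
    exact SimpleGraph.Walk.getVert_of_length_le _ (by
      have h2 : (pth y).length = 0 := h
      omega)
  have hcons : ∀ y, y ≠ r → ∃ (w : Dc.ι) (h : Dc.t.Adj y w),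
      pth y = SimpleGraph.Walk.cons h (pth w) ∧ par y = w ∧ depth w + 1 = depth y := by
    intro y hy
    obtain ⟨w, hadj, p', hp'⟩ := SimpleGraph.Walk.exists_eq_cons_of_ne hy (pth y)
    have hp'path : p'.IsPath := by
      have h := hpath y
      rw [hp'] at h
      exact h.of_cons
    have hpw : p' = pth w := huniq w p' hp'path
    refine ⟨w, hadj, by rw [hp', hpw], ?_, ?_⟩
    · show (pth y).getVert 1 = w
      rw [hp', SimpleGraph.Walk.getVert_cons_succ, SimpleGraph.Walk.getVert_zero]
    · show (pth w).length + 1 = (pth y).length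
      rw [hp', hpw, SimpleGraph.Walk.length_cons]
  have hpar : ∀ y, depth y ≠ 0 → depth (par y) + 1 = depth y := by
    intro y h
    have hy : y ≠ r := fun hc => h (by rw [hc]; exact hdr)
    obtain ⟨w, _, _, hw1, hw2⟩ := hcons y hy
    rw [hw1]; exact hw2
  -- adjacency gives parent relation
  have hadjpar : ∀ x y, Dc.t.Adj x y → par x = y ∨ par y = x := by
    intro x y hadj
    by_cases hy : y ∈ (pth x).support
    · left
      have htk := (hpath x).takeUntil hy
      have hedge : (SimpleGraph.Walk.cons hadj SimpleGraph.Walk.nil : Dc.t.Walk x y).IsPath := by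
        rw [SimpleGraph.Walk.cons_isPath_iff]
        refine ⟨SimpleGraph.Walk.IsPath.nil, ?_⟩
        simp [hadj.ne]
      have heq := (hEU x y).unique htk hedge
      have hspec := SimpleGraph.Walk.take_spec (pth x) hy
      rw [heq] at hspec
      show (pth x).getVert 1 = y
      rw [← hspec, SimpleGraph.Walk.cons_append, SimpleGraph.Walk.nil_append,
        SimpleGraph.Walk.getVert_cons_succ, SimpleGraph.Walk.getVert_zero]
    · right
      have hcons' : (SimpleGraph.Walk.cons hadj.symm (pth x) : Dc.t.Walk y r).IsPath := by
        rw [SimpleGraph.Walk.cons_isPath_iff]; exact ⟨hpath x, hy⟩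
      have heq := huniq y _ hcons'
      show (pth y).getVert 1 = x
      rw [← heq, SimpleGraph.Walk.getVert_cons_succ, SimpleGraph.Walk.getVert_zero]
  -- walks within the bag-subtree
  have hwalk : ∀ (v : V) (i j : Dc.ι), v ∈ Dc.bag i → v ∈ Dc.bag j →
      ∃ w : Dc.t.Walk i j, ∀ n ∈ w.support, v ∈ Dc.bag n := by
    intro v i j hi hj
    have hreach := (Dc.bag_connected v).preconnected ⟨i, hi⟩ ⟨j, hj⟩
    obtain ⟨w0⟩ := hreach
    refine ⟨w0.map (SimpleGraph.Embedding.induce {i | v ∈ Dc.bag i}).toHom, ?_⟩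
    intro n hn
    have hn2 : n ∈ List.map (SimpleGraph.Embedding.induce (G := Dc.t) {i | v ∈ Dc.bag i}).toHom w0.support := by
      rw [← SimpleGraph.Walk.support_map]; exact hn
    rw [List.mem_map] at hn2
    obtain ⟨m, _, rfl⟩ := hn2
    exact m.2
  -- common ancestors with presence
  have hCC : ∀ (v : V) (i j : Dc.ι) (w : Dc.t.Walk i j), (∀ n ∈ w.support, v ∈ Dc.bag n) →
      ∃ p q, par^[p] i = par^[q] j ∧ (∀ l ≤ p, v ∈ Dc.bag (par^[l] i)) ∧
        (∀ l ≤ q, v ∈ Dc.bag (par^[l] j)) := by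
    intro v i j w
    induction w with
    | nil =>
      intro h
      refine ⟨0, 0, rfl, ?_, ?_⟩ <;>
        · intro l hl
          have : l = 0 := by omega
          subst this
          exact h _ (SimpleGraph.Walk.start_mem_support _)
    | @cons i i₁ j hadj w' ih =>
      intro h
      have hi : v ∈ Dc.bag i := h _ (SimpleGraph.Walk.start_mem_support _)
      have h' : ∀ n ∈ w'.support, v ∈ Dc.bag n := fun n hn => h n
        (by rw [SimpleGraph.Walk.support_cons]; exact List.mem_cons_of_mem _ hn)
      obtain ⟨p, q, heq, hpi, hqj⟩ := ih h'
      rcases hadjpar _ _ hadj with hc | hc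
      · refine ⟨p+1, q, ?_, ?_, hqj⟩
        · rw [Function.iterate_succ_apply, hc]; exact heq
        · intro l hl
          cases l with
          | zero => exact hi
          | succ l =>
            rw [Function.iterate_succ_apply, hc]
            exact hpi l (by omega)
      · cases p with
        | zero =>
          refine ⟨0, q+1, ?_, ?_, ?_⟩
          · rw [Function.iterate_succ_apply']
            simp only [Function.iterate_zero, id_eq] at heq ⊢
            rw [← heq, hc]
          · intro l hl
            have : l = 0 := by omega
            subst this
            exact hi
          · intro l hl
            rcases Nat.lt_or_ge l (q+1) with h1 | h1
            · exact hqj l (by omega)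
            · have : l = q + 1 := by omega
              subst this
              rw [Function.iterate_succ_apply']
              simp only [Function.iterate_zero, id_eq] at heq
              rw [← heq, hc]
              exact hi
        | succ p =>
          refine ⟨p, q, ?_, ?_, hqj⟩
          · rw [← heq, Function.iterate_succ_apply, hc]
          · intro l hl
            have := hpi (l+1) (by omega)
            rw [Function.iterate_succ_apply, hc] at this
            exact this
  -- iterate depth arithmetic
  have hdepthiter : ∀ (k : ℕ) (y : Dc.ι), depth (par^[k] y) = depth y - k := by
    intro k
    induction k with
    | zero => intro y; simp
    | succ k ih =>
      intro y
      rw [Function.iterate_succ_apply']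
      have hik := ih y
      rcases Nat.eq_zero_or_pos (depth (par^[k] y)) with h0 | hpos
      · rw [hroot _ h0]; omega
      · have := hpar (par^[k] y) (by omega); omega
  have hiterfix : ∀ (y : Dc.ι), depth y = 0 → ∀ k, par^[k] y = y := by
    intro y h k
    induction k with
    | zero => rfl
    | succ k ih => rw [Function.iterate_succ_apply', ih, hroot _ h]
  have hiterstall : ∀ (k : ℕ) (y : Dc.ι), depth y ≤ k → par^[k] y = par^[depth y] y := by
    intro k y hk
    have h1 : k = (k - depth y) + depth y := by omega
    rw [h1, Function.iterate_add_apply]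
    apply hiterfix
    rw [hdepthiter]
    omega
  -- choose minimal-depth bag nodes
  have hex : ∀ v : V, ∃ y, v ∈ Dc.bag y ∧ ∀ z, v ∈ Dc.bag z → depth y ≤ depth z := by
    intro v
    obtain ⟨i, hi⟩ := Dc.mem_bag v
    have hSn : {n | ∃ y, v ∈ Dc.bag y ∧ depth y = n}.Nonempty := ⟨depth i, i, hi, rfl⟩
    obtain ⟨y, hy, hyd⟩ := Nat.sInf_mem hSn
    exact ⟨y, hy, fun z hz => hyd ▸ Nat.sInf_le ⟨z, hz, rfl⟩⟩
  choose tau htau1 htau2 using hex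
  -- the hanc property
  have hanc : ∀ (v : V) (y : Dc.ι), v ∈ Dc.bag y →
      ∃ k, k ≤ depth y ∧ par^[k] y = tau v ∧ ∀ j ≤ k, v ∈ Dc.bag (par^[j] y) := by
    intro v y hy
    obtain ⟨w, hw⟩ := hwalk v y (tau v) hy (htau1 v)
    obtain ⟨p, q, heq, hpy, hqt⟩ := hCC v y (tau v) w hw
    -- the common ancestor equals tau v
    have hm : par^[q] (tau v) = tau v := by
      have hmem : v ∈ Dc.bag (par^[q] (tau v)) := hqt q (le_refl q)
      have hge : depth (tau v) ≤ depth (par^[q] (tau v)) := htau2 v _ hmem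
      have hle : depth (par^[q] (tau v)) = depth (tau v) - q := hdepthiter q (tau v)
      rcases Nat.lt_or_ge q (depth (tau v) + 1) with h1 | h1
      · have : q = 0 := by omega
        subst this
        rfl
      · have hd0 : depth (tau v) = 0 := by omega
        exact hiterfix _ hd0 q
    rw [hm] at heq
    -- normalize p to at most depth y
    rcases Nat.lt_or_ge p (depth y + 1) with h1 | h1
    · exact ⟨p, by omega, heq, hpy⟩
    · refine ⟨depth y, le_refl _, ?_, fun j hj => hpy j (by omega)⟩
      rw [← hiterstall p y (by omega)]
      exact heq
  -- build the rooted decomposition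
  have hbagfin : ∀ y, (Dc.bag y).Finite := fun y => Set.toFinite _
  set D : RDec V G t :=
    { N := Dc.ι
      depth := depth
      par := par
      hroot := hroot
      hpar := hpar
      bag := fun y => (hbagfin y).toFinset
      tau := tau
      htau := fun v => (hbagfin (tau v)).mem_toFinset.mpr (htau1 v)
      hanc := by
        intro v y hy
        rw [Set.Finite.mem_toFinset] at hy
        obtain ⟨k, h1, h2, h3⟩ := hanc v y hy
        exact ⟨k, h1, h2, fun j hj => (hbagfin _).mem_toFinset.mpr (h3 j hj)⟩
      hedge := by
        intro u v huv
        obtain ⟨y, h1, h2⟩ := Dc.edge_bag huv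
        exact ⟨y, (hbagfin y).mem_toFinset.mpr h1, (hbagfin y).mem_toFinset.mpr h2⟩
      hcard := by
        intro y
        have h1 := hDc y
        rw [Set.ncard_eq_toFinset_card _ (hbagfin y)] at h1
        exact h1 } with hDdef
  -- the guide order
  have hcV : 0 < Fintype.card V := Fintype.card_pos_iff.mpr ⟨v₀⟩
  set rnk0 : V → ℕ :=
    fun v => depth (tau v) * Fintype.card V + (Fintype.equivFin V v : ℕ) with hrnk0
  have hrnk0inj : Function.Injective rnk0 := by
    intro u v h
    rw [hrnk0] at h
    simp only at h
    have hu := (Fintype.equivFin V u).2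
    have hv := (Fintype.equivFin V v).2
    have hdd : depth (tau u) = depth (tau v) := by
      rcases Nat.lt_trichotomy (depth (tau u)) (depth (tau v)) with h1 | h1 | h1
      · nlinarith
      · exact h1
      · nlinarith
    have : (Fintype.equivFin V u : ℕ) = (Fintype.equivFin V v : ℕ) := by
      rw [hdd] at h
      omega
    exact (Fintype.equivFin V).injective (Fin.ext this)
  have hrnk0mono : ∀ u v, rnk0 u ≤ rnk0 v → D.depth (D.tau u) ≤ D.depth (D.tau v) := by
    intro u v h
    show depth (tau u) ≤ depth (tau v)
    rw [hrnk0] at h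
    simp only at h
    have hu := (Fintype.equivFin V u).2
    have hv := (Fintype.equivFin V v).2
    by_contra hc
    push_neg at hc
    nlinarith
  refine ⟨{ G := G
            D := D
            R := fun u v => rnk0 u ≤ rnk0 v
            th := rnk0
            hRrefl := fun u => le_refl _
            hRtrans := fun _ _ _ h1 h2 => le_trans h1 h2
            hRchain := fun v x y _ _ => le_total _ _
            hguard := fun y u _ w _ => le_total _ _
            hmono := hrnk0mono
            hth := fun u v h hne => lt_of_le_of_ne h (fun hc => hne (hrnk0inj hc)) }, rfl⟩

end Frag

end Frag

/-- The class of graphs of treewidth at most `t` is fractionally td-fragile at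
rate `r a = 2^(t(t+1)/2 + 1) · a^t`: for every such graph `G` and positive
integer `a` there is a probability distribution on vertex subsets `X`, with
each vertex in `X` with probability at most `1/a`, such that
`td(G − X) ≤ 2^(t(t+1)/2+1) a^t` always. -/
theorem treewidth_td_fragile (t : ℕ) {V : Type} [Fintype V] [DecidableEq V]
    (G : SimpleGraph V) (htw : TreewidthLE G t) (a : ℕ) (ha : 0 < a) :
    ∃ P : Finset V → ℝ,
      (∀ X, 0 ≤ P X) ∧ (∑ X : Finset V, P X = 1) ∧
      (∀ X : Finset V, P X ≠ 0 →
        treedepth (G.induce (↑(Xᶜ) : Set V)) ≤ 2 ^ (t * (t + 1) / 2 + 1) * a ^ t) ∧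
      (∀ v : V, ∑ X ∈ Finset.univ.filter (fun X : Finset V => v ∈ X), P X ≤ 1 / (a : ℝ)) := by
  classical
  by_cases hV : Nonempty V
  · obtain ⟨S, hSG⟩ := Frag.exists_setup G t htw hV
    obtain ⟨P, hP1, hP2, hP3, hP4⟩ := Frag.core t V S a ha
    refine ⟨P, hP1, hP2, ?_, hP4⟩
    intro X hX
    obtain ⟨le, l1, l2, l3, l4, l5, l6, l7⟩ := hP3 X hX
    rw [hSG] at l5
    have hmem : TreedepthLE (G.induce (↑(Xᶜ) : Set V)) (Frag.rate t a) := by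
      refine ⟨fun u v => le u.1 v.1, ⟨?_, ?_, ?_, ?_, ?_⟩, ?_⟩
      · intro u; exact l1 u.1
      · intro u v w h1 h2; exact l2 h1 h2
      · intro u v h1 h2; exact Subtype.ext (l3 h1 h2)
      · intro v x y hx hy; exact l4 v.1 x.1 y.1 hx hy
      · intro u v hadj
        have hu : u.1 ∉ X := Finset.mem_compl.mp (Finset.mem_coe.mp u.2)
        have hv : v.1 ∉ X := Finset.mem_compl.mp (Finset.mem_coe.mp v.2)
        have hadj' : G.Adj u.1 v.1 := hadj
        exact l5 u.1 v.1 hu hv hadj'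
      · intro v
        calc {u : ↥(↑(Xᶜ) : Set V) | le u.1 v.1}.ncard
            = (Subtype.val '' {u : ↥(↑(Xᶜ) : Set V) | le u.1 v.1}).ncard :=
              (Set.ncard_image_of_injective _ Subtype.val_injective).symm
          _ ≤ {u : V | le u v.1}.ncard := by
              apply Set.ncard_le_ncard _ (Set.toFinite _)
              rintro _ ⟨u, hu, rfl⟩
              exact hu
          _ ≤ Frag.rate t a := l7 v.1
    calc treedepth (G.induce (↑(Xᶜ) : Set V)) ≤ Frag.rate t a := Nat.sInf_le hmem
      _ ≤ 2 ^ (t * (t + 1) / 2 + 1) * a ^ t := Frag.rate_le_bound t a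
  · have hVe : IsEmpty V := not_nonempty_iff.mp hV
    refine ⟨fun X => if X = ∅ then 1 else 0, ?_, ?_, ?_, ?_⟩
    · intro X; dsimp only; split <;> norm_num
    · simp
      rfl
    · intro X _
      have hmem : TreedepthLE (G.induce (↑(Xᶜ) : Set V))
          (2 ^ (t * (t + 1) / 2 + 1) * a ^ t) := by
        refine ⟨Eq, ⟨fun _ => rfl, fun _ _ _ h1 h2 => h1.trans h2, fun _ _ h1 _ => h1,
          fun v x y hx hy => Or.inl (hx.trans hy.symm), ?_⟩, ?_⟩
        · intro u v hadj; exact (hVe.false u.1).elim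
        · intro v; exact (hVe.false v.1).elim
      exact Nat.sInf_le hmem
    · intro v; exact (hVe.false v).elim
end

section
/- Let r : ℕ → ℝ≥0 be non-decreasing and define r'(a) = r(a+1). Let f be a graph parameter whose value on the empty graph is at most r(1). A class 𝒢 of graphs is fractionally f-fragile at rate r if and only if it is fractionally f-colorable by 1 color at rate r'; i.e., for every positive integer a and every G ∈ 𝒢, there exists a fractional (f, r'(a))-coloring of G using at most 1 + 1/a colors. -/
/-- A graph parameter: a real-valued function on finite graphs. -/
abbrev GraphParam := ∀ (V : Type) [Fintype V], SimpleGraph V → ℝ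

/-- `G` is fractionally `f`-fragile at rate `r`: for every positive integer `a`
there is a `(1/a)`-thin probability distribution on subsets `X` of `V(G)`
supported on sets with `f (G - X) ≤ r a`. -/
def FracFragile (f : GraphParam) {V : Type} [Fintype V] [DecidableEq V]
    (G : SimpleGraph V) (r : ℕ → ℝ) : Prop :=
  ∀ a : ℕ, 0 < a → ∃ P : Finset V → ℝ,
    (∀ X, 0 ≤ P X) ∧ (∑ X : Finset V, P X = 1) ∧
    (∀ X : Finset V, P X ≠ 0 → f _ (G.induce (↑(Xᶜ) : Set V)) ≤ r a) ∧
    (∀ v : V, ∑ X ∈ Finset.univ.filter (fun X : Finset V => v ∈ X), P X ≤ 1 / (a : ℝ))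

/-- A graph parameter is invariant under isomorphism. -/
def IsoInvariant (f : GraphParam) : Prop :=
  ∀ {V W : Type} [Fintype V] [Fintype W] (G : SimpleGraph V) (H : SimpleGraph W),
    Nonempty (G ≃g H) → f _ G = f _ H

/-- `κ` is a fractional `(f, b)`-coloring of `G`: a `[0,1]`-valued function on
the subsets `Y` of `V(G)` supported on sets with `f (G[Y]) ≤ b`, such that each
vertex receives total value at least `1`. -/
def IsFracColoring (f : GraphParam) {V : Type} [Fintype V] [DecidableEq V]
    (G : SimpleGraph V) (b : ℝ) (κ : Finset V → ℝ) : Prop :=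
  (∀ Y, 0 ≤ κ Y ∧ κ Y ≤ 1) ∧
  (∀ Y : Finset V, κ Y ≠ 0 → f _ (G.induce (↑Y : Set V)) ≤ b) ∧
  (∀ v : V, 1 ≤ ∑ Y ∈ Finset.univ.filter (fun Y : Finset V => v ∈ Y), κ Y)

lemma sum_compl_eq {V : Type} [Fintype V] [DecidableEq V] (g : Finset V → ℝ) :
    ∑ X : Finset V, g Xᶜ = ∑ X : Finset V, g X :=
  Fintype.sum_bijective compl (Function.Involutive.bijective compl_compl) _ _ (fun _ => rfl)

lemma sum_filter_compl {V : Type} [Fintype V] [DecidableEq V] (g : Finset V → ℝ) (v : V) :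
    ∑ X ∈ Finset.univ.filter (fun X : Finset V => v ∈ X), g Xᶜ
      = ∑ Y ∈ Finset.univ.filter (fun Y : Finset V => v ∉ Y), g Y := by
  apply Finset.sum_nbij' (fun X => Xᶜ) (fun Y => Yᶜ) <;> simp [Finset.mem_compl]

lemma iso_empty_bound (f : GraphParam) (hiso : IsoInvariant f) (r : ℕ → ℝ)
    (hempty : f Empty (⊥ : SimpleGraph Empty) ≤ r 1)
    {V : Type} [Fintype V] (G : SimpleGraph V) (s : Set V) [Fintype s] (hs : ∀ x, x ∉ s) :
    f _ (G.induce s) ≤ r 1 := by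
  haveI : IsEmpty s := ⟨fun x => hs x x.2⟩
  have h : f _ (G.induce s) = f Empty (⊥ : SimpleGraph Empty) := by
    apply hiso
    exact ⟨⟨Equiv.equivEmpty s, by intro a b; exact isEmptyElim a⟩⟩
  linarith

/-- Let `r` be non-decreasing, `r' a = r (a+1)`, and let `f` be a graph
parameter whose value on the empty graph is at most `r 1`.  A class `𝒢` of
graphs is fractionally `f`-fragile at rate `r` iff it is fractionally
`f`-colorable by one color at rate `r'`, i.e. every `G ∈ 𝒢` has, for every
positive integer `a`, a fractional `(f, r' a)`-coloring using at most `1 + 1/a`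
colors. -/
theorem frac_fragile_iff_frac_colorable (f : GraphParam) (hiso : IsoInvariant f)
    (r : ℕ → ℝ) (hr : Monotone r)
    (hempty : f Empty (⊥ : SimpleGraph Empty) ≤ r 1)
    (𝒢 : ∀ (V : Type) [Fintype V] [DecidableEq V], SimpleGraph V → Prop) :
    (∀ (V : Type) [Fintype V] [DecidableEq V] (G : SimpleGraph V),
        𝒢 V G → FracFragile f G r) ↔
    (∀ (V : Type) [Fintype V] [DecidableEq V] (G : SimpleGraph V),
        𝒢 V G → ∀ a : ℕ, 0 < a → ∃ κ : Finset V → ℝ,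
          IsFracColoring f G (r (a + 1)) κ ∧
          ∑ Y : Finset V, κ Y ≤ 1 + 1 / (a : ℝ)) := by
  constructor
  · -- fragile → colorable
    intro hfrag V _ _ G hG a ha
    obtain ⟨P, hP0, hP1, hP2, hP3⟩ := hfrag V G hG (a + 1) (by omega)
    have hA : (1 : ℝ) ≤ (a : ℝ) := by exact_mod_cast ha
    set c : ℝ := 1 + 1 / (a : ℝ) with hc
    have hc0 : 0 ≤ c := by positivity
    refine ⟨fun Y => min 1 (c * P Yᶜ), ⟨fun Y => ⟨le_min zero_le_one (mul_nonneg hc0 (hP0 _)), min_le_left _ _⟩, ?_, ?_⟩, ?_⟩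
    · -- support
      intro Y hY
      have hPY : P Yᶜ ≠ 0 := by
        intro h0
        apply hY
        simp [h0]
      have := hP2 Yᶜ hPY
      rwa [compl_compl] at this
    · -- coverage
      intro v
      by_cases hall : ∀ Y ∈ Finset.univ.filter (fun Y : Finset V => v ∈ Y), c * P Yᶜ ≤ 1
      · have heq : ∑ Y ∈ Finset.univ.filter (fun Y : Finset V => v ∈ Y), min 1 (c * P Yᶜ)
            = ∑ Y ∈ Finset.univ.filter (fun Y : Finset V => v ∈ Y), c * P Yᶜ :=
          Finset.sum_congr rfl (fun Y hY => min_eq_right (hall Y hY))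
        rw [heq, ← Finset.mul_sum, sum_filter_compl]
        have hsplit := Finset.sum_filter_add_sum_filter_not Finset.univ (fun X : Finset V => v ∈ X) P
        rw [hP1] at hsplit
        have ht := hP3 v
        have hA1 : (0:ℝ) < (a:ℝ) + 1 := by linarith
        have hcast : ((a + 1 : ℕ) : ℝ) = (a : ℝ) + 1 := by push_cast; ring
        rw [hcast] at ht
        have : ∑ Y ∈ Finset.univ.filter (fun Y : Finset V => v ∉ Y), P Y
            = 1 - ∑ X ∈ Finset.univ.filter (fun X : Finset V => v ∈ X), P X := by linarith
        rw [this]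
        have hApos : (0:ℝ) < (a:ℝ) := by linarith
        rw [hc]
        have h3 : (∑ X ∈ Finset.univ.filter (fun X : Finset V => v ∈ X), P X) * ((a:ℝ)+1) ≤ 1 :=
          (le_div_iff₀ hA1).mp ht
        have hc' : (1:ℝ) + 1/(a:ℝ) = ((a:ℝ)+1)/(a:ℝ) := by field_simp
        rw [hc', div_mul_eq_mul_div, le_div_iff₀ hApos, one_mul]
        nlinarith [h3]
      · push_neg at hall
        obtain ⟨Y₀, hY₀mem, hY₀⟩ := hall
        have h1 : min 1 (c * P Y₀ᶜ) = 1 := min_eq_left (le_of_lt hY₀)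
        calc (1:ℝ) = min 1 (c * P Y₀ᶜ) := h1.symm
          _ ≤ ∑ Y ∈ Finset.univ.filter (fun Y : Finset V => v ∈ Y), min 1 (c * P Yᶜ) :=
            Finset.single_le_sum (f := fun Y => min 1 (c * P Yᶜ))
              (fun Y _ => le_min zero_le_one (mul_nonneg hc0 (hP0 _))) hY₀mem
    · -- total
      calc ∑ Y : Finset V, min 1 (c * P Yᶜ) ≤ ∑ Y : Finset V, c * P Yᶜ :=
            Finset.sum_le_sum (fun Y _ => min_le_right _ _)
        _ = c * ∑ Y : Finset V, P Yᶜ := by rw [Finset.mul_sum]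
        _ = c * 1 := by rw [sum_compl_eq, hP1]
        _ = 1 + 1 / (a : ℝ) := by rw [mul_one]
  · -- colorable → fragile
    intro hcol V _ _ G hG
    intro a ha
    by_cases hcase : a = 1 ∨ IsEmpty V
    · -- delta on univ
      refine ⟨fun X => if X = Finset.univ then 1 else 0, fun X => by positivity, by simp, ?_, ?_⟩
      · intro X hX
        have hXu : X = Finset.univ := by by_contra h; simp [h] at hX
        subst hXu
        have hb : f _ (G.induce (↑((Finset.univ : Finset V)ᶜ) : Set V)) ≤ r 1 := by
          apply iso_empty_bound f hiso r hempty
          intro x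
          simp
        exact le_trans hb (hr ha)
      · intro v
        rcases hcase with h1 | hE
        · subst h1
          have : ∑ X ∈ Finset.univ.filter (fun X : Finset V => v ∈ X), (if X = Finset.univ then (1:ℝ) else 0)
              ≤ ∑ X : Finset V, (if X = Finset.univ then (1:ℝ) else 0) := by
            apply Finset.sum_le_sum_of_subset_of_nonneg (Finset.filter_subset _ _)
            intro X _ _; positivity
          simp only [Nat.cast_one]
          rw [one_div_one]
          simpa using this
        · exact (hE.false v).elim
    · push_neg at hcase
      obtain ⟨ha1, hne⟩ := hcase
      have ha2 : 2 ≤ a := by omega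
      haveI : Nonempty V := hne
      obtain ⟨κ, ⟨hκ01, hκsupp, hκcov⟩, hκtot⟩ := hcol V G hG (a - 1) (by omega)
      have hsub : a - 1 + 1 = a := by omega
      rw [hsub] at hκsupp
      set S := ∑ Y : Finset V, κ Y with hS
      have hS1 : 1 ≤ S := by
        obtain ⟨v⟩ := ‹Nonempty V›
        calc (1:ℝ) ≤ ∑ Y ∈ Finset.univ.filter (fun Y : Finset V => v ∈ Y), κ Y := hκcov v
          _ ≤ S := Finset.sum_le_sum_of_subset_of_nonneg (Finset.filter_subset _ _)
              (fun Y _ _ => (hκ01 Y).1)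
      have hS0 : S ≠ 0 := by linarith
      have hSpos : 0 < S := by linarith
      have hA : (2:ℝ) ≤ (a:ℝ) := by exact_mod_cast ha2
      have hcast : ((a - 1 : ℕ) : ℝ) = (a:ℝ) - 1 := by
        have : (1:ℕ) ≤ a := by omega
        push_cast [Nat.cast_sub this]; ring
      rw [hcast] at hκtot
      have hSub : S ≤ 1 + 1 / ((a:ℝ) - 1) := hκtot
      refine ⟨fun X => κ Xᶜ / S, fun X => div_nonneg (hκ01 Xᶜ).1 hSpos.le, ?_, ?_, ?_⟩
      · rw [← Finset.sum_div, sum_compl_eq, ← hS, div_self hS0]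
      · intro X hX
        have : κ Xᶜ ≠ 0 := fun h0 => hX (by simp [h0])
        exact hκsupp Xᶜ this
      · intro v
        rw [← Finset.sum_div, sum_filter_compl]
        have hsplit := Finset.sum_filter_add_sum_filter_not Finset.univ (fun Y : Finset V => v ∈ Y) κ
        have hcov := hκcov v
        have hnum : ∑ Y ∈ Finset.univ.filter (fun Y : Finset V => v ∉ Y), κ Y ≤ S - 1 := by
          have : ∑ Y ∈ Finset.univ.filter (fun Y : Finset V => v ∈ Y), κ Y
              + ∑ Y ∈ Finset.univ.filter (fun Y : Finset V => v ∉ Y), κ Y = S := hsplit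
          linarith
        have hApos : (0:ℝ) < (a:ℝ) := by linarith
        rw [div_le_div_iff₀ hSpos hApos]
        have hA1 : (0:ℝ) < (a:ℝ) - 1 := by linarith
        have e : 1/((a:ℝ)-1) * ((a:ℝ)-1) = 1 := by field_simp
        have key : (S - 1) * (a:ℝ) ≤ S := by
          nlinarith [mul_le_mul_of_nonneg_right hSub hA1.le, e]
        nlinarith
end
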